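/- Let g ≥ 2 be an integer and ω(k) the number of distinct prime divisors of k. There is a constant c > 0 (depending only on g) such that for all sufficiently large N, ω(∏_{p prime, g^{N−1} ≤ p ≤ g^N−1} p_g*) ≥ c·N²/(log N)². -/

import Mathlib

/-- The mirror reflection of `s` in base `g`: the integer whose `g`-ary digit
string is the reverse of that of `s`. -/
def mirror (g s : ℕ) : ℕ := Nat.ofDigits g ((Nat.digits g s).reverse)

lemma digits_mirror {g s : ℕ} (hg : 2 ≤ g) (hs : ¬ g ∣ s) :
    Nat.digits g (mirror g s) = (Nat.digits g s).reverse := by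
  have hs0 : s ≠ 0 := by rintro rfl; exact hs (dvd_zero g)
  apply Nat.digits_ofDigits g hg
  · intro l hl
    exact Nat.digits_lt_base hg (List.mem_reverse.mp hl)
  · intro h
    rw [List.getLast_reverse]
    intro hh
    have := Nat.digits_def' (by omega : 1 < g) (Nat.pos_of_ne_zero hs0)
    simp only [this, List.head_cons] at hh
    exact hs (Nat.dvd_of_mod_eq_zero hh)

lemma mirror_mirror {g s : ℕ} (hg : 2 ≤ g) (hs : ¬ g ∣ s) :
    mirror g (mirror g s) = s := by
  rw [mirror, digits_mirror hg hs, List.reverse_reverse, Nat.ofDigits_digits]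

lemma mirror_ne_zero {g s : ℕ} (hg : 2 ≤ g) (hs : ¬ g ∣ s) : mirror g s ≠ 0 := by
  intro h
  have := mirror_mirror hg hs
  rw [h] at this
  simp [mirror] at this
  exact hs (this ▸ dvd_zero g)

lemma mirror_lt {g s N : ℕ} (hg : 2 ≤ g) (hsN : s < g ^ N) : mirror g s < g ^ N := by
  calc mirror g s < g ^ (Nat.digits g s).reverse.length :=
        Nat.ofDigits_lt_base_pow_length (by omega)
          (fun x hx => Nat.digits_lt_base hg (List.mem_reverse.mp hx))
    _ ≤ g ^ N := by
        apply Nat.pow_le_pow_right (by omega)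
        rw [List.length_reverse]
        rcases Nat.eq_zero_or_pos s with rfl | hs0
        · simp
        rw [Nat.digits_len g s (by omega) (by omega)]
        have := Nat.log_lt_of_lt_pow (by omega : s ≠ 0) hsN
        omega


lemma smooth_sum_le (E : ℕ) : ∀ (S : Finset ℕ), (∀ q ∈ S, Nat.Prime q) →
    ∀ (T : Finset ℕ), (∀ x ∈ T, x ≠ 0 ∧ x.primeFactors ⊆ S ∧ ∀ q, x.factorization q ≤ E) →
    ∑ x ∈ T, ((x : ℝ)) ^ (-(1/2 : ℝ)) ≤
      ∏ q ∈ S, ∑ e ∈ Finset.range (E+1), (((q : ℝ)) ^ (-(1/2 : ℝ))) ^ e := by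
  classical
  intro S
  induction S using Finset.induction_on with
  | empty =>
    intro _ T hT
    have hT1 : T ⊆ {1} := by
      intro x hx
      obtain ⟨hx0, hxP, -⟩ := hT x hx
      have : x.primeFactors = ∅ := Finset.subset_empty.mp hxP
      rcases Nat.primeFactors_eq_empty.mp this with h | h
      · exact absurd h hx0
      · simp [h]
    calc ∑ x ∈ T, ((x:ℝ)) ^ (-(1/2:ℝ))
        ≤ ∑ x ∈ ({1} : Finset ℕ), ((x:ℝ)) ^ (-(1/2:ℝ)) :=
          Finset.sum_le_sum_of_subset_of_nonneg hT1
            (fun i _ _ => Real.rpow_nonneg (Nat.cast_nonneg i) _)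
      _ = 1 := by simp
      _ = _ := by simp
  | @insert q S' hq ih =>
    intro hS T hT
    have hqp : Nat.Prime q := hS q (Finset.mem_insert_self q S')
    have hS' : ∀ r ∈ S', Nat.Prime r := fun r hr => hS r (Finset.mem_insert_of_mem hr)
    have hmaps : ∀ x ∈ T, x.factorization q ∈ Finset.range (E+1) := by
      intro x hx
      exact Finset.mem_range.mpr (Nat.lt_succ_of_le ((hT x hx).2.2 q))
    rw [← Finset.sum_fiberwise_of_maps_to hmaps]
    rw [Finset.prod_insert hq]
    have key : ∀ e ∈ Finset.range (E+1),
        ∑ x ∈ T.filter (fun x => x.factorization q = e), ((x:ℝ)) ^ (-(1/2:ℝ)) ≤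
        (((q:ℝ)) ^ (-(1/2:ℝ))) ^ e *
          ∏ r ∈ S', ∑ e ∈ Finset.range (E+1), (((r : ℝ)) ^ (-(1/2 : ℝ))) ^ e := by
      intro e _
      set Te := T.filter (fun x => x.factorization q = e) with hTe
      have hmem : ∀ x ∈ Te, x ∈ T ∧ x.factorization q = e := by
        intro x hx; exact ⟨(Finset.mem_filter.mp hx).1, (Finset.mem_filter.mp hx).2⟩
      have hinj : ∀ x ∈ Te, ∀ y ∈ Te, x / q ^ x.factorization q = y / q ^ y.factorization q
          → x = y := by
        intro a ha b hb hab
        obtain ⟨haT, hae⟩ := hmem a ha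
        obtain ⟨hbT, hbe⟩ := hmem b hb
        have ha' := Nat.ordProj_mul_ordCompl_eq_self a q
        have hb' := Nat.ordProj_mul_ordCompl_eq_self b q
        rw [← ha', ← hb', hab, hae, hbe]
      have hval : ∀ x ∈ Te, ((x:ℝ)) ^ (-(1/2:ℝ)) =
          (((q:ℝ)) ^ (-(1/2:ℝ))) ^ e * ((x / q ^ x.factorization q : ℕ) : ℝ) ^ (-(1/2:ℝ)) := by
        intro x hx
        obtain ⟨hxT, hxe⟩ := hmem x hx
        have hx' := Nat.ordProj_mul_ordCompl_eq_self x q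
        rw [hxe] at hx' ⊢
        have hcast : ((x:ℝ)) = ((q:ℝ)) ^ (e:ℕ) * ((x / q ^ e : ℕ) : ℝ) := by
          rw [← Nat.cast_pow, ← Nat.cast_mul, hx']
        rw [hcast, Real.mul_rpow (by positivity) (Nat.cast_nonneg _)]
        congr 1
        rw [← Real.rpow_natCast (((q:ℝ)) ^ (-(1/2:ℝ))) e, ← Real.rpow_mul (Nat.cast_nonneg q),
          ← Real.rpow_natCast ((q:ℝ)) e, ← Real.rpow_mul (Nat.cast_nonneg q), mul_comm]
      rw [Finset.sum_congr rfl hval, ← Finset.mul_sum]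
      apply mul_le_mul_of_nonneg_left _ (by positivity)
      have himg := Finset.sum_image (s := Te) (f := fun y : ℕ => ((y:ℝ)) ^ (-(1/2:ℝ)))
        (g := fun x : ℕ => x / q ^ x.factorization q) hinj
      rw [← himg]
      apply ih hS'
      intro y hy
      obtain ⟨x, hx, rfl⟩ := Finset.mem_image.mp hy
      obtain ⟨hxT, hxe⟩ := hmem x hx
      obtain ⟨hx0, hxP, hxE⟩ := hT x hxT
      refine ⟨Nat.ordCompl_pos q hx0 |>.ne', ?_, ?_⟩
      · intro r hr
        have hrx : r ∈ x.primeFactors := by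
          have : ((x / q ^ x.factorization q)) ∣ x := Nat.ordCompl_dvd x q
          exact Nat.primeFactors_mono this hx0 hr
        have hrq : r ≠ q := by
          intro h
          have := Nat.mem_primeFactors.mp hr
          have h2 : ((x / q ^ x.factorization q)).factorization r ≠ 0 := by
            rw [← Nat.support_factorization] at hr
            exact Finsupp.mem_support_iff.mp hr
          rw [Nat.factorization_ordCompl, h, Finsupp.erase_same] at h2
          exact h2 rfl
        have := hxP hrx
        rcases Finset.mem_insert.mp this with h | h
        · exact absurd h hrq
        · exact h
      · intro r
        rw [Nat.factorization_ordCompl]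
        rcases eq_or_ne r q with rfl | hrq
        · simp
        · rw [Finsupp.erase_ne hrq]; exact hxE r
    calc ∑ e ∈ Finset.range (E+1), ∑ x ∈ T.filter (fun x => x.factorization q = e),
          ((x:ℝ)) ^ (-(1/2:ℝ))
        ≤ ∑ e ∈ Finset.range (E+1), (((q:ℝ)) ^ (-(1/2:ℝ))) ^ e *
            ∏ r ∈ S', ∑ e ∈ Finset.range (E+1), (((r : ℝ)) ^ (-(1/2 : ℝ))) ^ e :=
          Finset.sum_le_sum key
      _ = _ := by rw [← Finset.sum_mul]


lemma my_geom_le {r : ℝ} (h0 : 0 ≤ r) (h1 : r < 1) (n : ℕ) :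
    ∑ e ∈ Finset.range n, r ^ e ≤ (1 - r)⁻¹ := by
  rw [geom_sum_eq h1.ne]
  have hrn : 0 ≤ r ^ n := pow_nonneg h0 n
  have : (r ^ n - 1) / (r - 1) = (1 - r ^ n) / (1 - r) := by
    rw [div_eq_div_iff (by linarith) (by linarith)]; ring
  rw [this, div_le_iff₀ (by linarith), inv_mul_cancel₀ (by linarith : (1:ℝ) - r ≠ 0)]
  linarith

lemma nat_rpow_neg_half (j : ℕ) : ((j:ℝ)) ^ (-(1/2:ℝ)) = (Real.sqrt j)⁻¹ := by
  rw [Real.rpow_neg (Nat.cast_nonneg j), Real.sqrt_eq_rpow]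

lemma sum_inv_sqrt_le (m : ℕ) :
    ∑ j ∈ Finset.Icc 1 m, ((j:ℝ)) ^ (-(1/2:ℝ)) ≤ 2 * Real.sqrt m := by
  induction m with
  | zero => simp
  | succ m ih =>
    rw [Finset.sum_Icc_succ_top (by omega : 1 ≤ m + 1)]
    have hb : (0:ℝ) < Real.sqrt (m+1) := Real.sqrt_pos.mpr (by positivity)
    have hb2 : Real.sqrt (m+1) * Real.sqrt (m+1) = (m:ℝ)+1 := by
      exact Real.mul_self_sqrt (by positivity)
    have ha2 : Real.sqrt m * Real.sqrt m = (m:ℝ) := Real.mul_self_sqrt (Nat.cast_nonneg m)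
    have key : (Real.sqrt (m+1))⁻¹ ≤ 2 * Real.sqrt (m+1) - 2 * Real.sqrt m := by
      rw [inv_le_iff_one_le_mul₀ hb]
      nlinarith [sq_nonneg (Real.sqrt (m+1) - Real.sqrt m)]
    have hcast : (((m+1 : ℕ)):ℝ) = (m:ℝ)+1 := by push_cast; ring
    rw [nat_rpow_neg_half, hcast]
    push_cast
    linarith

lemma prime_sum_sqrt (S : Finset ℕ) (hS : ∀ q ∈ S, 2 ≤ q) :
    ∑ q ∈ S, ((q:ℝ)) ^ (-(1/2:ℝ)) ≤ 3 * Real.sqrt (S.card + 2) := by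
  classical
  set k := S.card with hk
  have hsplit := Finset.sum_filter_add_sum_filter_not S (fun q => q ≤ k + 1)
    (fun q => ((q:ℝ)) ^ (-(1/2:ℝ)))
  have h1 : ∑ q ∈ S.filter (fun q => q ≤ k + 1), ((q:ℝ)) ^ (-(1/2:ℝ))
      ≤ 2 * Real.sqrt (k + 1) := by
    calc ∑ q ∈ S.filter (fun q => q ≤ k + 1), ((q:ℝ)) ^ (-(1/2:ℝ))
        ≤ ∑ q ∈ Finset.Icc 1 (k+1), ((q:ℝ)) ^ (-(1/2:ℝ)) := by
          apply Finset.sum_le_sum_of_subset_of_nonneg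
          · intro q hq
            obtain ⟨hqS, hql⟩ := Finset.mem_filter.mp hq
            exact Finset.mem_Icc.mpr ⟨by have := hS q hqS; omega, hql⟩
          · intro i _ _; positivity
      _ ≤ 2 * Real.sqrt (k+1) := by
          have := sum_inv_sqrt_le (k+1)
          push_cast at this ⊢
          linarith
  have h2 : ∑ q ∈ S.filter (fun q => ¬ q ≤ k + 1), ((q:ℝ)) ^ (-(1/2:ℝ))
      ≤ Real.sqrt (k + 2) := by
    have hcard : (S.filter (fun q => ¬ q ≤ k + 1)).card ≤ k :=
      hk ▸ Finset.card_le_card (Finset.filter_subset _ _)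
    have hterm : ∀ q ∈ S.filter (fun q => ¬ q ≤ k + 1),
        ((q:ℝ)) ^ (-(1/2:ℝ)) ≤ (Real.sqrt (k+2))⁻¹ := by
      intro q hq
      obtain ⟨hqS, hql⟩ := Finset.mem_filter.mp hq
      rw [nat_rpow_neg_half]
      apply inv_anti₀ (Real.sqrt_pos.mpr (by positivity))
      apply Real.sqrt_le_sqrt
      push_cast
      have : k + 2 ≤ q := by omega
      exact_mod_cast this
    calc ∑ q ∈ S.filter (fun q => ¬ q ≤ k + 1), ((q:ℝ)) ^ (-(1/2:ℝ))
        ≤ ∑ _q ∈ S.filter (fun q => ¬ q ≤ k + 1), (Real.sqrt (k+2))⁻¹ :=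
          Finset.sum_le_sum hterm
      _ = (S.filter (fun q => ¬ q ≤ k + 1)).card * (Real.sqrt (k+2))⁻¹ := by
          rw [Finset.sum_const, nsmul_eq_mul]
      _ ≤ k * (Real.sqrt (k+2))⁻¹ := by
          apply mul_le_mul_of_nonneg_right _ (by positivity)
          exact_mod_cast hcard
      _ ≤ Real.sqrt (k + 2) := by
          rw [mul_inv_le_iff₀ (Real.sqrt_pos.mpr (by positivity))]
          have : Real.sqrt (k+2) * Real.sqrt (k+2) = (k:ℝ)+2 :=
            Real.mul_self_sqrt (by positivity)
          nlinarith
  have hmono : Real.sqrt (k+1) ≤ Real.sqrt (k+2) := Real.sqrt_le_sqrt (by norm_num)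
  linarith

lemma smooth_card_le (S : Finset ℕ) (hS : ∀ q ∈ S, Nat.Prime q) (X : ℕ) (hX : 1 ≤ X)
    (T : Finset ℕ) (hT : ∀ x ∈ T, x ≠ 0 ∧ x ≤ X ∧ x.primeFactors ⊆ S) :
    (T.card : ℝ) ≤ ((X:ℝ)) ^ ((1:ℝ)/2) * Real.exp (12 * Real.sqrt (S.card + 2)) := by
  classical
  -- step 1: card ≤ X^{1/2} * ∑ x^{-1/2}
  have step1 : (T.card : ℝ) ≤ ((X:ℝ)) ^ ((1:ℝ)/2) * ∑ x ∈ T, ((x:ℝ)) ^ (-(1/2:ℝ)) := by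
    rw [Finset.mul_sum]
    calc (T.card : ℝ) = ∑ _x ∈ T, (1:ℝ) := by rw [Finset.sum_const, nsmul_eq_mul, mul_one]
      _ ≤ ∑ x ∈ T, ((X:ℝ)) ^ ((1:ℝ)/2) * ((x:ℝ)) ^ (-(1/2:ℝ)) := by
          apply Finset.sum_le_sum
          intro x hx
          obtain ⟨hx0, hxX, -⟩ := hT x hx
          have hxpos : (0:ℝ) < (x:ℝ) := by exact_mod_cast Nat.pos_of_ne_zero hx0
          rw [nat_rpow_neg_half, ← div_eq_mul_inv, le_div_iff₀ (Real.sqrt_pos.mpr hxpos),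
            one_mul]
          calc Real.sqrt x ≤ Real.sqrt X := Real.sqrt_le_sqrt (by exact_mod_cast hxX)
            _ = ((X:ℝ)) ^ ((1:ℝ)/2) := Real.sqrt_eq_rpow _
  -- step 2: Rankin sum bound
  have step2 : ∑ x ∈ T, ((x:ℝ)) ^ (-(1/2:ℝ)) ≤
      ∏ q ∈ S, ∑ e ∈ Finset.range (X+1), (((q:ℝ)) ^ (-(1/2:ℝ))) ^ e := by
    apply smooth_sum_le X S hS T
    intro x hx
    obtain ⟨hx0, hxX, hxP⟩ := hT x hx
    exact ⟨hx0, hxP, fun q => le_trans (Nat.factorization_lt q hx0).le hxX⟩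
  -- step 3: each geometric factor ≤ exp(4 q^{-1/2})
  have step3 : ∏ q ∈ S, ∑ e ∈ Finset.range (X+1), (((q:ℝ)) ^ (-(1/2:ℝ))) ^ e ≤
      Real.exp (4 * ∑ q ∈ S, ((q:ℝ)) ^ (-(1/2:ℝ))) := by
    rw [Finset.mul_sum, Real.exp_sum]
    apply Finset.prod_le_prod
    · intro q _
      apply Finset.sum_nonneg
      intro e _
      positivity
    · intro q hq
      have hq2 : 2 ≤ q := (hS q hq).two_le
      set r : ℝ := ((q:ℝ)) ^ (-(1/2:ℝ)) with hr
      have hr0 : 0 ≤ r := Real.rpow_nonneg (Nat.cast_nonneg q) _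
      have hrs : r = (Real.sqrt q)⁻¹ := nat_rpow_neg_half q
      have hsq : Real.sqrt 2 ≤ Real.sqrt q := Real.sqrt_le_sqrt (by exact_mod_cast hq2)
      have h2 : (1.4:ℝ) ≤ Real.sqrt 2 := by
        rw [show (2:ℝ) = 1.4 * 1.4 + 0.04 by norm_num]
        have := Real.sqrt_le_sqrt (by norm_num : (1.4:ℝ) * 1.4 ≤ 1.4 * 1.4 + 0.04)
        rw [Real.sqrt_mul_self (by norm_num : (0:ℝ) ≤ 1.4)] at this
        linarith
      have hrle : r ≤ 0.72 := by
        rw [hrs]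
        have h14 : (0:ℝ) < 1.4 := by norm_num
        calc (Real.sqrt q)⁻¹ ≤ (1.4:ℝ)⁻¹ :=
              inv_anti₀ h14 (le_trans h2 hsq)
          _ ≤ 0.72 := by norm_num
      have hrlt : r < 1 := lt_of_le_of_lt hrle (by norm_num)
      calc ∑ e ∈ Finset.range (X+1), r ^ e ≤ (1 - r)⁻¹ := my_geom_le hr0 hrlt _
        _ ≤ 1 + 4 * r := by
            rw [inv_le_iff_one_le_mul₀ (by linarith)]
            nlinarith
        _ ≤ Real.exp (4 * r) := by
            have := Real.add_one_le_exp (4 * r)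
            linarith
  -- step 4: combine
  have step4 : Real.exp (4 * ∑ q ∈ S, ((q:ℝ)) ^ (-(1/2:ℝ))) ≤
      Real.exp (12 * Real.sqrt (S.card + 2)) := by
    apply Real.exp_le_exp.mpr
    have := prime_sum_sqrt S (fun q hq => (hS q hq).two_le)
    linarith
  have hXpow : (0:ℝ) ≤ ((X:ℝ)) ^ ((1:ℝ)/2) := Real.rpow_nonneg (Nat.cast_nonneg X) _
  calc (T.card : ℝ) ≤ ((X:ℝ)) ^ ((1:ℝ)/2) * ∑ x ∈ T, ((x:ℝ)) ^ (-(1/2:ℝ)) := step1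
    _ ≤ ((X:ℝ)) ^ ((1:ℝ)/2) * Real.exp (12 * Real.sqrt (S.card + 2)) := by
        apply mul_le_mul_of_nonneg_left _ hXpow
        exact le_trans step2 (le_trans step3 step4)


lemma centralBinom_le_dyadic (n : ℕ) (hn : 2 < n) :
    Nat.centralBinom n ≤ (2*n) ^ (Nat.sqrt (2*n) + 1) * 4 ^ (2*n/3) *
      (2*n) ^ (((Finset.Ioc n (2*n)).filter Nat.Prime).card) := by
  classical
  have n_pos : 0 < n := by omega
  have n2_pos : 0 < 2 * n := by omega
  set s := Nat.sqrt (2*n) with hs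
  set R := Finset.range (2*n+1) with hR
  set f : ℕ → ℕ := fun p => p ^ (Nat.centralBinom n).factorization p with hf
  have hsplit1 : ∏ p ∈ R, f p =
      (∏ p ∈ R.filter (fun p => p ≤ s), f p) * ∏ p ∈ R.filter (fun p => ¬ p ≤ s), f p :=
    (Finset.prod_filter_mul_prod_filter_not R _ f).symm
  set R2 := R.filter (fun p => ¬ p ≤ s) with hR2
  have hsplit2 : ∏ p ∈ R2, f p =
      (∏ p ∈ R2.filter (fun p => p ≤ n), f p) * ∏ p ∈ R2.filter (fun p => ¬ p ≤ n), f p :=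
    (Finset.prod_filter_mul_prod_filter_not R2 _ f).symm
  -- low range
  have hlow : ∏ p ∈ R.filter (fun p => p ≤ s), f p ≤ (2*n) ^ (s + 1) := by
    calc ∏ p ∈ R.filter (fun p => p ≤ s), f p ≤ (2*n) ^ (R.filter (fun p => p ≤ s)).card :=
          Finset.prod_le_pow_card _ f (2*n)
            (fun p _ => Nat.pow_factorization_choose_le n2_pos)
      _ ≤ (2*n) ^ (s + 1) := by
          apply Nat.pow_le_pow_right n2_pos
          calc (R.filter (fun p => p ≤ s)).card ≤ (Finset.range (s+1)).card := by
                apply Finset.card_le_card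
                intro p hp
                have := (Finset.mem_filter.mp hp).2
                exact Finset.mem_range.mpr (by omega)
            _ = s + 1 := Finset.card_range _
  -- mid range
  have hmid : ∏ p ∈ R2.filter (fun p => p ≤ n), f p ≤ 4 ^ (2*n/3) := by
    have hpt : ∀ p ∈ R2.filter (fun p => p ≤ n),
        f p ≤ if p.Prime ∧ 3*p ≤ 2*n then p else 1 := by
      intro p hp
      obtain ⟨hpR2, hpn⟩ := Finset.mem_filter.mp hp
      have hps : ¬ p ≤ s := (Finset.mem_filter.mp hpR2).2
      by_cases hprime : p.Prime
      · by_cases h3 : 3*p ≤ 2*n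
        · simp only [hprime, h3, and_self, if_true]
          have hv : (Nat.centralBinom n).factorization p ≤ 1 :=
            Nat.factorization_choose_le_one (Nat.sqrt_lt'.mp (not_le.mp hps))
          calc f p ≤ p ^ 1 := Nat.pow_le_pow_right hprime.pos hv
            _ = p := pow_one p
        · have hv : (Nat.centralBinom n).factorization p = 0 :=
            Nat.factorization_centralBinom_of_two_mul_self_lt_three_mul hn hpn (by omega)
          simp only [hf, hv, pow_zero]
          split_ifs with h'
          · exact h'.1.pos
          · exact le_rfl
      · have hv : (Nat.centralBinom n).factorization p = 0 :=
          Nat.factorization_eq_zero_of_not_prime _ hprime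
        simp only [hf, hv, pow_zero]
        split_ifs with h'
        · exact h'.1.pos
        · exact le_rfl
    calc ∏ p ∈ R2.filter (fun p => p ≤ n), f p
        ≤ ∏ p ∈ R2.filter (fun p => p ≤ n), (if p.Prime ∧ 3*p ≤ 2*n then p else 1) :=
          Finset.prod_le_prod' hpt
      _ = ∏ p ∈ (R2.filter (fun p => p ≤ n)).filter (fun p => p.Prime ∧ 3*p ≤ 2*n), p :=
          (Finset.prod_filter _ _).symm
      _ ≤ ∏ p ∈ (Finset.range (2*n/3+1)).filter Nat.Prime, p := by
          apply Finset.prod_le_prod_of_subset_of_one_le'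
          · intro p hp
            obtain ⟨-, hpp, h3⟩ := Finset.mem_filter.mp hp
            refine Finset.mem_filter.mpr ⟨Finset.mem_range.mpr ?_, hpp⟩
            omega
          · intro p hp _
            exact ((Finset.mem_filter.mp hp).2).one_lt.le
      _ ≤ 4 ^ (2*n/3) := by simpa [primorial] using primorial_le_4_pow (2*n/3)
  -- high range
  have hhigh : ∏ p ∈ R2.filter (fun p => ¬ p ≤ n), f p ≤
      (2*n) ^ (((Finset.Ioc n (2*n)).filter Nat.Prime).card) := by
    have hpt : ∀ p ∈ R2.filter (fun p => ¬ p ≤ n),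
        f p ≤ if p.Prime then 2*n else 1 := by
      intro p hp
      by_cases hprime : p.Prime
      · simp only [hprime, if_true]
        exact Nat.pow_factorization_choose_le n2_pos
      · have hv : (Nat.centralBinom n).factorization p = 0 :=
          Nat.factorization_eq_zero_of_not_prime _ hprime
        simp only [hf, hv, pow_zero]
        split_ifs <;> omega
    calc ∏ p ∈ R2.filter (fun p => ¬ p ≤ n), f p
        ≤ ∏ p ∈ R2.filter (fun p => ¬ p ≤ n), (if p.Prime then 2*n else 1) :=
          Finset.prod_le_prod' hpt
      _ = ∏ p ∈ (R2.filter (fun p => ¬ p ≤ n)).filter Nat.Prime, 2*n :=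
          (Finset.prod_filter _ _).symm
      _ = (2*n) ^ ((R2.filter (fun p => ¬ p ≤ n)).filter Nat.Prime).card :=
          Finset.prod_const _
      _ ≤ (2*n) ^ (((Finset.Ioc n (2*n)).filter Nat.Prime).card) := by
          apply Nat.pow_le_pow_right n2_pos
          apply Finset.card_le_card
          intro p hp
          obtain ⟨hp1, hpp⟩ := Finset.mem_filter.mp hp
          obtain ⟨hpR2, hpn⟩ := Finset.mem_filter.mp hp1
          have hpR : p ∈ R := (Finset.mem_filter.mp hpR2).1
          have := Finset.mem_range.mp (hR ▸ hpR)
          exact Finset.mem_filter.mpr ⟨Finset.mem_Ioc.mpr ⟨by omega, by omega⟩, hpp⟩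
  calc Nat.centralBinom n = ∏ p ∈ R, f p := (Nat.prod_pow_factorization_centralBinom n).symm
    _ = (∏ p ∈ R.filter (fun p => p ≤ s), f p) * ∏ p ∈ R2, f p := hsplit1
    _ = (∏ p ∈ R.filter (fun p => p ≤ s), f p) *
        ((∏ p ∈ R2.filter (fun p => p ≤ n), f p) * ∏ p ∈ R2.filter (fun p => ¬ p ≤ n), f p) := by
        rw [← hsplit2]
    _ ≤ (2*n) ^ (s + 1) * (4 ^ (2*n/3) *
        (2*n) ^ (((Finset.Ioc n (2*n)).filter Nat.Prime).card)) :=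
        Nat.mul_le_mul hlow (Nat.mul_le_mul hmid hhigh)
    _ = _ := by ring

lemma pow6_le {a b : ℝ} (ha : 0 ≤ a) (hb : 0 ≤ b) (h : a^(6:ℕ) ≤ b^(6:ℕ)) : a ≤ b := by
  by_contra hc
  push_neg at hc
  exact absurd h (not_le.mpr (by gcongr))

lemma primes_Ioc_lower {n : ℕ} (hn : 10^11 ≤ n) :
    ((n:ℝ)) ^ ((2:ℝ)/3) ≤ (((Finset.Ioc n (2*n)).filter Nat.Prime).card : ℝ) := by
  classical
  set k' := ((Finset.Ioc n (2*n)).filter Nat.Prime).card with hk'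
  have hn3 : 2 < n := by omega
  have n_pos : 0 < n := by omega
  set s := Nat.sqrt (2*n) with hs
  set j := 2*n/3 with hj
  have hnat : 4^n ≤ (2*n) ^ (s + 2) * 4 ^ j * (2*n) ^ k' := by
    calc 4^n ≤ 2 * n * Nat.centralBinom n :=
          Nat.four_pow_le_two_mul_self_mul_centralBinom n n_pos
      _ ≤ 2 * n * ((2*n) ^ (s + 1) * 4 ^ j * (2*n) ^ k') :=
          Nat.mul_le_mul_left _ (centralBinom_le_dyadic n hn3)
      _ = (2*n) ^ (s + 2) * 4 ^ j * (2*n) ^ k' := by ring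
  -- move to ℝ and take logs
  have hR : ((4:ℝ))^n ≤ ((2*n : ℕ):ℝ) ^ (s + 2) * 4 ^ j * ((2*n : ℕ):ℝ) ^ k' := by
    exact_mod_cast hnat
  have h2n_pos : (0:ℝ) < ((2*n : ℕ):ℝ) := by positivity
  set L := Real.log (2*(n:ℝ)) with hL
  have hlog : (n:ℝ) * Real.log 4 ≤ ((s:ℝ) + 2) * L + (j:ℝ) * Real.log 4 + (k':ℝ) * L := by
    have h1 := Real.log_le_log (by positivity) hR
    rw [Real.log_pow, Real.log_mul (by positivity) (by positivity),
      Real.log_mul (by positivity) (by positivity), Real.log_pow, Real.log_pow,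
      Real.log_pow] at h1
    rw [hL]
    push_cast at h1 ⊢
    linarith
  -- abbreviation u = n^(1/6)
  set u := ((n:ℝ)) ^ ((1:ℝ)/6) with hu
  have hnR1 : (1:ℝ) ≤ (n:ℝ) := by exact_mod_cast n_pos
  have hu_pos : 0 < u := Real.rpow_pos_of_pos (by positivity) _
  have hu61 : (61:ℝ) ≤ u := by
    have h1 : ((61:ℝ)^(6:ℕ)) ^ ((1:ℝ)/6) ≤ u := by
      apply Real.rpow_le_rpow (by positivity) _ (by norm_num)
      have : (61:ℕ)^6 ≤ n := by norm_num at hn ⊢; omega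
      exact_mod_cast this
    calc (61:ℝ) = ((61:ℝ)^(6:ℕ)) ^ ((1:ℝ)/6) := by
          rw [← Real.rpow_natCast (61:ℝ) 6, ← Real.rpow_mul (by norm_num)]
          norm_num
      _ ≤ u := h1
  have hu4 : ((n:ℝ)) ^ ((2:ℝ)/3) = u^(4:ℕ) := by
    rw [hu, ← Real.rpow_natCast (((n:ℝ)) ^ ((1:ℝ)/6)) 4, ← Real.rpow_mul (by positivity)]
    norm_num
  have hu6 : (n:ℝ) = u^(6:ℕ) := by
    rw [hu, ← Real.rpow_natCast (((n:ℝ)) ^ ((1:ℝ)/6)) 6, ← Real.rpow_mul (by positivity)]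
    norm_num
  have hu3 : ((n:ℝ)) ^ ((1:ℝ)/2) = u^(3:ℕ) := by
    rw [hu, ← Real.rpow_natCast (((n:ℝ)) ^ ((1:ℝ)/6)) 3, ← Real.rpow_mul (by positivity)]
    norm_num
  -- bound on s
  have hs_le : (s:ℝ) ≤ 1.5 * u^(3:ℕ) := by
    have h1 : (s:ℝ) ≤ Real.sqrt ((2*n : ℕ):ℝ) := Real.nat_sqrt_le_real_sqrt
    have h2 : Real.sqrt ((2*n : ℕ):ℝ) = Real.sqrt 2 * Real.sqrt n := by
      push_cast
      rw [← Real.sqrt_mul (by norm_num)]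
    have h3 : Real.sqrt 2 ≤ 1.5 := by
      apply pow6_le (Real.sqrt_nonneg 2) (by norm_num)
      rw [show ((6:ℕ)) = 2*3 by norm_num, pow_mul, Real.sq_sqrt (by norm_num : (0:ℝ) ≤ 2)]
      norm_num
    have h4 : Real.sqrt n = ((n:ℝ)) ^ ((1:ℝ)/2) := Real.sqrt_eq_rpow _
    rw [h2, h4, hu3] at h1
    have : (0:ℝ) ≤ u^(3:ℕ) := by positivity
    nlinarith [Real.sqrt_nonneg (2:ℝ)]
  -- bound on L
  have hL7 : L ≤ 7 * u := by
    have h216 : ((2:ℝ)) ^ ((1:ℝ)/6) ≤ 7/6 := by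
      apply pow6_le (by positivity) (by norm_num)
      rw [← Real.rpow_natCast (((2:ℝ)) ^ ((1:ℝ)/6)) 6, ← Real.rpow_mul (by norm_num)]
      norm_num
    have h2npos' : (0:ℝ) < 2*(n:ℝ) := by positivity
    have h1 : L = 6 * Real.log ((2*(n:ℝ)) ^ ((1:ℝ)/6)) := by
      rw [Real.log_rpow h2npos']; ring
    have h2 : Real.log ((2*(n:ℝ)) ^ ((1:ℝ)/6)) ≤ (2*(n:ℝ)) ^ ((1:ℝ)/6) := by
      have := Real.log_le_sub_one_of_pos (Real.rpow_pos_of_pos h2npos' ((1:ℝ)/6))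
      linarith
    have h3 : (2*(n:ℝ)) ^ ((1:ℝ)/6) = ((2:ℝ)) ^ ((1:ℝ)/6) * u := by
      rw [Real.mul_rpow (by norm_num) (by positivity)]
    have h4 : ((2:ℝ)) ^ ((1:ℝ)/6) * u ≤ (7/6) * u :=
      mul_le_mul_of_nonneg_right h216 hu_pos.le
    calc L = 6 * Real.log ((2*(n:ℝ)) ^ ((1:ℝ)/6)) := h1
      _ ≤ 6 * ((7/6) * u) := by
          apply mul_le_mul_of_nonneg_left _ (by norm_num)
          rw [h3] at h2 ⊢
          linarith
      _ = 7 * u := by ring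
  -- bound on j and log 4
  have hjle : (j:ℝ) ≤ 2*(n:ℝ)/3 := by
    rw [hj]
    have := Nat.cast_div_le (α := ℝ) (m := 2*n) (n := 3)
    push_cast at this ⊢
    linarith
  have hlog4_lb : (1.386:ℝ) ≤ Real.log 4 := by
    have h2 : Real.log 4 = 2 * Real.log 2 := by
      rw [show (4:ℝ) = 2^(2:ℕ) by norm_num, Real.log_pow]; push_cast; ring
    have := Real.log_two_gt_d9
    rw [h2]; linarith
  have hlog4_pos : (0:ℝ) < Real.log 4 := by linarith
  have hL_pos : 0 < L := by
    apply Real.log_pos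
    linarith
  -- final arithmetic
  have hmono : ∀ a b : ℕ, a ≤ b → (u:ℝ)^a ≤ u^b := fun a b hab =>
    pow_le_pow_right₀ (by linarith) hab
  have hkey : ((n:ℝ)) ^ ((2:ℝ)/3) * L ≤ (k':ℝ) * L := by
    rw [hu4]
    have e1 : ((s:ℝ) + 2) * L ≤ 10.5*u^(4:ℕ) + 14*u := by
      have e1a : ((s:ℝ)+2) ≤ 1.5*u^(3:ℕ)+2 := by linarith
      calc ((s:ℝ)+2)*L ≤ (1.5*u^(3:ℕ)+2)*(7*u) :=
            mul_le_mul e1a hL7 hL_pos.le (by positivity)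
        _ = 10.5*u^(4:ℕ) + 14*u := by ring
    have e2 : (j:ℝ) * Real.log 4 ≤ (2*(n:ℝ)/3) * Real.log 4 :=
      mul_le_mul_of_nonneg_right hjle hlog4_pos.le
    have e3 : u^(4:ℕ) * L ≤ 7 * u^(5:ℕ) := by
      calc u^(4:ℕ) * L ≤ u^(4:ℕ) * (7*u) :=
            mul_le_mul_of_nonneg_left hL7 (by positivity)
        _ = 7 * u^(5:ℕ) := by ring
    have e4 : 7*u^(5:ℕ) + (10.5*u^(4:ℕ) + 14*u) + (2*(n:ℝ)/3) * Real.log 4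
        ≤ (n:ℝ) * Real.log 4 := by
      have m1 : u^(5:ℕ) * 61 ≤ u^(6:ℕ) := by
        calc u^(5:ℕ) * 61 ≤ u^(5:ℕ) * u := mul_le_mul_of_nonneg_left hu61 (by positivity)
          _ = u^(6:ℕ) := by ring
      have m2 : u^(4:ℕ) * 61 ≤ u^(5:ℕ) := by
        calc u^(4:ℕ) * 61 ≤ u^(4:ℕ) * u := mul_le_mul_of_nonneg_left hu61 (by positivity)
          _ = u^(5:ℕ) := by ring
      have m3 : u * 61 ≤ u^(2:ℕ) := by
        calc u * 61 ≤ u * u := mul_le_mul_of_nonneg_left hu61 (by positivity)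
          _ = u^(2:ℕ) := by ring
      have m4 : u^(2:ℕ) * 61 ≤ u^(3:ℕ) := by
        calc u^(2:ℕ) * 61 ≤ u^(2:ℕ) * u := mul_le_mul_of_nonneg_left hu61 (by positivity)
          _ = u^(3:ℕ) := by ring
      have m5 : u^(3:ℕ) * 61 ≤ u^(4:ℕ) := by
        calc u^(3:ℕ) * 61 ≤ u^(3:ℕ) * u := mul_le_mul_of_nonneg_left hu61 (by positivity)
          _ = u^(4:ℕ) := by ring
      have hu0 : 0 ≤ u := hu_pos.le
      have b1 : 7*u^(5:ℕ) ≤ (7/61)*u^(6:ℕ) := by linarith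
      have b2 : u^(4:ℕ) ≤ (1/3721)*u^(6:ℕ) := by linarith
      have b3 : u ≤ u^(4:ℕ) := by linarith
      have hof : (1.386:ℝ)*((1:ℝ)/3*u^(6:ℕ)) ≤ Real.log 4*((1:ℝ)/3*u^(6:ℕ)) :=
        mul_le_mul_of_nonneg_right hlog4_lb (by positivity)
      rw [hu6]
      linarith
    linarith
  exact le_of_mul_le_mul_right hkey hL_pos

set_option maxHeartbeats 1000000 in
theorem stmt_10 (g : ℕ) (hg : 2 ≤ g) :
    ∃ c : ℝ, 0 < c ∧ ∃ N₀ : ℕ, ∀ N : ℕ, N₀ ≤ N →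
      c * (N : ℝ) ^ 2 / (Real.log N) ^ 2 ≤
        ((∏ p ∈ (Finset.Icc (g ^ (N - 1)) (g ^ N - 1)).filter Nat.Prime,
          mirror g p).primeFactors.card : ℝ) := by
  classical
  refine ⟨1/100000, by norm_num, 500, fun N hN => ?_⟩
  set n := g ^ (N-1) with hn
  set F := (Finset.Icc (g ^ (N - 1)) (g ^ N - 1)).filter Nat.Prime with hF
  set P := ∏ p ∈ F, mirror g p with hP
  set S := P.primeFactors with hS
  set k := S.card with hk
  -- basic positivity facts
  have hgN : (2:ℕ) ≤ g ^ N := le_trans hg (Nat.le_self_pow (by omega) g)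
  have hn_big : 10^11 ≤ n := by
    rw [hn]
    calc (10:ℕ)^11 ≤ 2^(37:ℕ) := by norm_num
      _ ≤ 2^(N-1) := Nat.pow_le_pow_right (by norm_num) (by omega)
      _ ≤ g^(N-1) := Nat.pow_le_pow_left hg _
  have hgg : g < n := by
    calc g = g^1 := (pow_one g).symm
      _ < g^(N-1) := Nat.pow_lt_pow_right (by omega) (by omega)
  have h2n : 2*n ≤ g^N := by
    have : g^N = g * g^(N-1) := by
      rw [← pow_succ']
      congr 1
      omega
    rw [this]
    exact Nat.mul_le_mul_right _ hg
  -- primes in F are not divisible by g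
  have hnd : ∀ p ∈ F, ¬ g ∣ p := by
    intro p hp hdvd
    obtain ⟨hpIcc, hpp⟩ := Finset.mem_filter.mp hp
    obtain ⟨hp1, hp2⟩ := Finset.mem_Icc.mp hpIcc
    obtain ⟨q, hqp, hqg⟩ := Nat.exists_prime_and_dvd (by omega : g ≠ 1)
    have hqdvd : q ∣ p := hqg.trans hdvd
    have : q = p := (Nat.prime_dvd_prime_iff_eq hqp hpp).mp hqdvd
    have hqleg : q ≤ g := Nat.le_of_dvd (by omega) hqg
    omega
  -- step A : many primes
  have hsub : (Finset.Ioc n (2*n)).filter Nat.Prime ⊆ F := by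
    intro p hp
    obtain ⟨hpIoc, hpp⟩ := Finset.mem_filter.mp hp
    obtain ⟨hp1, hp2⟩ := Finset.mem_Ioc.mp hpIoc
    refine Finset.mem_filter.mpr ⟨Finset.mem_Icc.mpr ⟨by omega, ?_⟩, hpp⟩
    have hple : p ≤ g^N := le_trans hp2 h2n
    have hne : p ≠ g^N := by
      intro h
      obtain ⟨q, hqp, hqg⟩ := Nat.exists_prime_and_dvd (by omega : g ≠ 1)
      have hqdvd : q ∣ p := by
        rw [h]
        exact hqg.trans (dvd_pow_self g (by omega : N ≠ 0))
      have : q = p := (Nat.prime_dvd_prime_iff_eq hqp hpp).mp hqdvd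
      have hqleg : q ≤ g := Nat.le_of_dvd (by omega) hqg
      have : g < p := by omega
      omega
    omega
  have hA : ((n:ℝ)) ^ ((2:ℝ)/3) ≤ (F.card : ℝ) := by
    calc ((n:ℝ)) ^ ((2:ℝ)/3) ≤ (((Finset.Ioc n (2*n)).filter Nat.Prime).card : ℝ) :=
          primes_Ioc_lower hn_big
      _ ≤ (F.card : ℝ) := by exact_mod_cast Finset.card_le_card hsub
  -- step B : injectivity of mirror on F
  have hinj : Set.InjOn (mirror g) F := by
    intro a ha b hb hab
    have := mirror_mirror hg (hnd a ha)
    rw [hab, mirror_mirror hg (hnd b hb)] at this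
    exact this.symm
  have hcard : (F.image (mirror g)).card = F.card := Finset.card_image_of_injOn hinj
  -- step C : …and mirrors are S-smooth, ≤ g^N
  have hP0 : P ≠ 0 := by
    rw [hP, Finset.prod_ne_zero_iff]
    exact fun p hp => mirror_ne_zero hg (hnd p hp)
  have hsm : ∀ x ∈ F.image (mirror g), x ≠ 0 ∧ x ≤ g^N ∧ x.primeFactors ⊆ S := by
    intro x hx
    obtain ⟨p, hp, rfl⟩ := Finset.mem_image.mp hx
    refine ⟨mirror_ne_zero hg (hnd p hp), ?_, ?_⟩
    · have hplt : p < g^N := by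
        obtain ⟨hpIcc, -⟩ := Finset.mem_filter.mp hp
        obtain ⟨-, hp2⟩ := Finset.mem_Icc.mp hpIcc
        omega
      exact (mirror_lt hg hplt).le
    · apply Nat.primeFactors_mono (Finset.dvd_prod_of_mem _ hp) hP0
  have hB : ((F.card : ℝ)) ≤ ((g^N : ℕ):ℝ) ^ ((1:ℝ)/2) * Real.exp (12 * Real.sqrt (k + 2)) := by
    rw [← hcard]
    exact smooth_card_le S (fun q hq => Nat.prime_of_mem_primeFactors hq) (g^N) (by omega)
      (F.image (mirror g)) hsm
  -- combine: take logs
  have hn_pos : (0:ℝ) < (n:ℝ) := by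
    have : 0 < n := by omega
    exact_mod_cast this
  have hgN_posR : (0:ℝ) < ((g^N : ℕ):ℝ) := by positivity
  have hlogg : Real.log 2 ≤ Real.log g :=
    Real.log_le_log (by norm_num) (by exact_mod_cast hg)
  have hlog2 : (0.6931:ℝ) ≤ Real.log 2 := by
    have := Real.log_two_gt_d9; linarith
  have hmain : ((2:ℝ)/3) * (((N-1 : ℕ)):ℝ) * Real.log g ≤
      ((1:ℝ)/2) * ((N:ℝ)) * Real.log g + 12 * Real.sqrt (k + 2) := by
    have hchain : ((n:ℝ)) ^ ((2:ℝ)/3) ≤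
        ((g^N : ℕ):ℝ) ^ ((1:ℝ)/2) * Real.exp (12 * Real.sqrt (k + 2)) :=
      le_trans hA hB
    have hlogle := Real.log_le_log (by positivity) hchain
    rw [Real.log_rpow hn_pos, Real.log_mul (by positivity) (Real.exp_ne_zero _),
      Real.log_rpow hgN_posR, Real.log_exp] at hlogle
    have hlogn : Real.log (n:ℝ) = (((N-1:ℕ)):ℝ) * Real.log g := by
      rw [hn]
      push_cast
      rw [Real.log_pow]
    have hloggN : Real.log ((g^N : ℕ):ℝ) = ((N:ℝ)) * Real.log g := by
      push_cast
      rw [Real.log_pow]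
    rw [hlogn, hloggN] at hlogle
    linarith
  -- numeric extraction
  have hNR : (500:ℝ) ≤ (N:ℝ) := by exact_mod_cast hN
  have hNm1 : (((N-1:ℕ)):ℝ) = (N:ℝ) - 1 := by
    have : (1:ℕ) ≤ N := by omega
    push_cast [this]
    ring
  have hloggpos : (0:ℝ) < Real.log g := by linarith
  have hsqrt : ((N:ℝ)/208) ≤ Real.sqrt (k + 2) := by
    have h1 : ((N:ℝ)/12) * Real.log g ≤ 12 * Real.sqrt (k + 2) := by
      rw [hNm1] at hmain
      nlinarith
    have h2 : ((N:ℝ)/12) * 0.6931 ≤ ((N:ℝ)/12) * Real.log g := by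
      apply mul_le_mul_of_nonneg_left (by linarith) (by linarith)
    nlinarith
  have hk2 : ((N:ℝ)/208)^2 ≤ (k:ℝ) + 2 := by
    have h0 : (0:ℝ) ≤ ((N:ℝ)/208) := by linarith
    calc ((N:ℝ)/208)^2 ≤ (Real.sqrt ((k:ℝ) + 2))^2 := by
          apply pow_le_pow_left₀ h0 hsqrt
      _ = (k:ℝ) + 2 := Real.sq_sqrt (by positivity)
  have hkN : ((N:ℝ))^2 / 100000 ≤ (k:ℝ) := by nlinarith
  -- conclude
  have hlogN1 : (1:ℝ) ≤ Real.log N := by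
    rw [Real.le_log_iff_exp_le (by linarith)]
    have := Real.exp_one_lt_d9
    linarith
  calc (1/100000) * ((N:ℝ))^2 / (Real.log N)^2 ≤ (1/100000) * ((N:ℝ))^2 / 1 := by
        apply div_le_div_of_nonneg_left (by positivity) (by norm_num)
        nlinarith
    _ = ((N:ℝ))^2 / 100000 := by ring
    _ ≤ (k:ℝ) := hkN
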